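/- Let K be a field of characteristic p > 0 and let σ be an element of PGL₂(K) of finite order n. Then either p does not divide n, or n = p. -/

import Mathlib

open Matrix

/-- `PGL₂(K) = GL₂(K)/K^×`: over a field, the scalar matrices are exactly the
center of `GL₂(K)`. -/
abbrev PGL2 (K : Type*) [Field K] : Type _ :=
  GL (Fin 2) K ⧸ Subgroup.center (GL (Fin 2) K)

section aux

variable {K : Type*} [Field K]

lemma comm_nonscalar (A B : Matrix (Fin 2) (Fin 2) K) (hcomm : A * B = B * A)
    (hB : ¬ ∃ k : K, B = k • (1 : Matrix (Fin 2) (Fin 2) K)) :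
    ∃ x y : K, A = x • 1 + y • B := by
  have h : ∀ i j, (A * B) i j = (B * A) i j := fun i j => by rw [hcomm]
  simp only [Matrix.mul_apply, Fin.sum_univ_two] at h
  have h00 := h 0 0
  have h01 := h 0 1
  have h10 := h 1 0
  by_cases hf : B 0 1 ≠ 0
  · refine ⟨A 0 0 - (A 0 1 / B 0 1) * B 0 0, A 0 1 / B 0 1, ?_⟩
    ext i j
    fin_cases i <;> fin_cases j <;>
      simp only [Matrix.add_apply, Matrix.smul_apply, Matrix.one_apply, smul_eq_mul,
        Fin.isValue, Fin.zero_eta, Fin.mk_one, ne_eq, one_ne_zero,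
        not_false_eq_true, zero_ne_one, ite_true, ite_false, mul_one, mul_zero, add_zero,
        zero_add] <;> field_simp
    · ring
    · linear_combination -h00
    · linear_combination -h01
  · by_cases hg : B 1 0 ≠ 0
    · refine ⟨A 0 0 - (A 1 0 / B 1 0) * B 0 0, A 1 0 / B 1 0, ?_⟩
      ext i j
      fin_cases i <;> fin_cases j <;>
        simp only [Matrix.add_apply, Matrix.smul_apply, Matrix.one_apply, smul_eq_mul,
          Fin.isValue, Fin.zero_eta, Fin.mk_one, ne_eq, one_ne_zero,
          not_false_eq_true, zero_ne_one, ite_true, ite_false, mul_one, mul_zero, add_zero,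
          zero_add] <;> field_simp
      · ring
      · linear_combination h00
      · linear_combination h10
    · push_neg at hf hg
      have he : B 0 0 ≠ B 1 1 := by
        intro he
        exact hB ⟨B 0 0, by ext i j; fin_cases i <;> fin_cases j <;>
          simp [Matrix.one_apply, hf, hg, he]⟩
      have he' : B 0 0 - B 1 1 ≠ 0 := sub_ne_zero_of_ne he
      have hb : A 0 1 = 0 := by
        have : A 0 1 * (B 0 0 - B 1 1) = 0 := by
          rw [hf] at h01; linear_combination -h01
        exact (mul_eq_zero.1 this).resolve_right he'
      have hc : A 1 0 = 0 := by
        have : A 1 0 * (B 0 0 - B 1 1) = 0 := by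
          rw [hg] at h10; linear_combination h10
        exact (mul_eq_zero.1 this).resolve_right he'
      refine ⟨A 0 0 - (A 0 0 - A 1 1) / (B 0 0 - B 1 1) * B 0 0,
        (A 0 0 - A 1 1) / (B 0 0 - B 1 1), ?_⟩
      ext i j
      fin_cases i <;> fin_cases j <;>
        simp only [Matrix.add_apply, Matrix.smul_apply, Matrix.one_apply, smul_eq_mul,
          Fin.isValue, Fin.zero_eta, Fin.mk_one, ne_eq, one_ne_zero,
          not_false_eq_true, zero_ne_one, ite_true, ite_false, mul_one, mul_zero, add_zero,
          zero_add, hf, hg, hb, hc] <;> field_simp <;> ring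

/-- A scalar unit is central in `GL (Fin 2) K`. -/
lemma scalar_mem_center (u : GL (Fin 2) K) (k : K)
    (hu : (u : Matrix (Fin 2) (Fin 2) K) = k • 1) :
    u ∈ Subgroup.center (GL (Fin 2) K) := by
  rw [Subgroup.mem_center_iff]
  intro g
  ext : 1
  show (g : Matrix (Fin 2) (Fin 2) K) * u = (u : Matrix (Fin 2) (Fin 2) K) * g
  rw [hu, mul_smul_comm, smul_mul_assoc, mul_one, one_mul]

/-- A central element of `GL (Fin 2) K` is scalar. -/
lemma scalar_of_mem_center (u : GL (Fin 2) K)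
    (hu : u ∈ Subgroup.center (GL (Fin 2) K)) :
    ∃ k : K, (u : Matrix (Fin 2) (Fin 2) K) = k • 1 := by
  rw [Subgroup.mem_center_iff] at hu
  have hdet1 : (!![(1:K), 1; 0, 1] : Matrix (Fin 2) (Fin 2) K) * !![1, -1; 0, 1] = 1 := by
    simp [Matrix.mul_fin_two, Matrix.one_fin_two]
  have hdet1' : (!![(1:K), -1; 0, 1] : Matrix (Fin 2) (Fin 2) K) * !![1, 1; 0, 1] = 1 := by
    simp [Matrix.mul_fin_two, Matrix.one_fin_two]
  have hdet2 : (!![(1:K), 0; 1, 1] : Matrix (Fin 2) (Fin 2) K) * !![1, 0; -1, 1] = 1 := by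
    simp [Matrix.mul_fin_two, Matrix.one_fin_two]
  have hdet2' : (!![(1:K), 0; -1, 1] : Matrix (Fin 2) (Fin 2) K) * !![1, 0; 1, 1] = 1 := by
    simp [Matrix.mul_fin_two, Matrix.one_fin_two]
  set U1 : GL (Fin 2) K := ⟨!![1, 1; 0, 1], !![1, -1; 0, 1], hdet1, hdet1'⟩
  set U2 : GL (Fin 2) K := ⟨!![1, 0; 1, 1], !![1, 0; -1, 1], hdet2, hdet2'⟩
  have h1 : (!![(1:K), 1; 0, 1]) * (u : Matrix (Fin 2) (Fin 2) K)
      = (u : Matrix (Fin 2) (Fin 2) K) * !![1, 1; 0, 1] :=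
    congrArg Units.val (hu U1)
  have h2 : (!![(1:K), 0; 1, 1]) * (u : Matrix (Fin 2) (Fin 2) K)
      = (u : Matrix (Fin 2) (Fin 2) K) * !![1, 0; 1, 1] :=
    congrArg Units.val (hu U2)
  set M : Matrix (Fin 2) (Fin 2) K := (u : Matrix (Fin 2) (Fin 2) K) with hM
  rw [Matrix.eta_fin_two M] at h1 h2
  simp [Matrix.mul_fin_two] at h1 h2
  have e1 := h1.1.1
  have e2 := h1.1.2
  have e3 := h2.1
  refine ⟨M 0 0, ?_⟩
  have hy : M 1 0 = 0 := by linear_combination e1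
  have hx : M 0 1 = 0 := by linear_combination e3
  have hwz : M 0 0 = M 1 1 := by linear_combination -e2
  ext i j
  fin_cases i <;> fin_cases j <;>
    simp [Matrix.one_apply, hy, hx, hwz]

end aux

/-- If `K` is a field of characteristic `p > 0` and `σ ∈ PGL₂(K)` has finite
order `n`, then either `p ∤ n` or `n = p`. -/
theorem order_in_PGL2_charP {K : Type*} [Field K] (p : ℕ) [Fact p.Prime]
    [CharP K p] (σ : PGL2 K) (n : ℕ) (hn : 0 < n) (hord : orderOf σ = n) :
    ¬ p ∣ n ∨ n = p := by
  by_cases hpn : p ∣ n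
  · right
    have hp : p.Prime := Fact.out
    obtain ⟨A, rfl⟩ := QuotientGroup.mk_surjective σ
    set m := n / p with hmdef
    have hmp : m * p = n := Nat.div_mul_cancel hpn
    have hm0 : 0 < m := Nat.div_pos (Nat.le_of_dvd hn hpn) hp.pos
    have hmn : m < n := Nat.div_lt_self hn hp.one_lt
    have hmkpow : ∀ k : ℕ, (QuotientGroup.mk (A ^ k) : GL (Fin 2) K ⧸ Subgroup.center (GL (Fin 2) K))
        = (QuotientGroup.mk A) ^ k := fun k => by
      rw [← QuotientGroup.mk'_apply, ← QuotientGroup.mk'_apply, map_pow]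
    have hτ : A ^ m ∉ Subgroup.center (GL (Fin 2) K) := by
      intro hcen
      have h1 : (QuotientGroup.mk A : GL (Fin 2) K ⧸ Subgroup.center (GL (Fin 2) K)) ^ m = 1 := by
        rw [← hmkpow, QuotientGroup.eq_one_iff]; exact hcen
      have := orderOf_dvd_of_pow_eq_one h1
      rw [hord] at this
      exact absurd (Nat.le_of_dvd hm0 this) (not_le.2 hmn)
    have hAn : A ^ n ∈ Subgroup.center (GL (Fin 2) K) := by
      rw [← QuotientGroup.eq_one_iff, hmkpow, ← hord]
      exact pow_orderOf_eq_one _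
    obtain ⟨c, hc⟩ := scalar_of_mem_center _ hAn
    set B : Matrix (Fin 2) (Fin 2) K := ((A ^ m : GL (Fin 2) K) : Matrix (Fin 2) (Fin 2) K)
      with hBdef
    have hBval : B = (A : Matrix (Fin 2) (Fin 2) K) ^ m := Units.val_pow_eq_pow_val A m
    have hBn : ¬ ∃ k : K, B = k • 1 := fun ⟨k, hk⟩ => hτ (scalar_mem_center _ k hk)
    have hcom : (A : Matrix (Fin 2) (Fin 2) K) * B = B * (A : Matrix (Fin 2) (Fin 2) K) := by
      rw [hBval]; exact ((Commute.refl _).pow_right m)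
    obtain ⟨x, y, hxy⟩ := comm_nonscalar (A : Matrix (Fin 2) (Fin 2) K) B hcom hBn
    have hBp : B ^ p = c • 1 := by
      rw [hBval, ← pow_mul, hmp, ← Units.val_pow_eq_pow_val, hc]
    have hApval : ((A ^ p : GL (Fin 2) K) : Matrix (Fin 2) (Fin 2) K)
        = (x ^ p + y ^ p * c) • 1 := by
      rw [Units.val_pow_eq_pow_val, hxy,
        add_pow_char_of_commute p (Commute.smul_left (Commute.smul_right (Commute.one_left B) y) x),
        smul_pow, smul_pow, one_pow, hBp, smul_smul, ← add_smul]
    have hcen : A ^ p ∈ Subgroup.center (GL (Fin 2) K) := scalar_mem_center _ _ hApval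
    have h1 : (QuotientGroup.mk A : GL (Fin 2) K ⧸ Subgroup.center (GL (Fin 2) K)) ^ p = 1 := by
      rw [← hmkpow, QuotientGroup.eq_one_iff]; exact hcen
    have hdvd := orderOf_dvd_of_pow_eq_one h1
    rw [hord] at hdvd
    exact Nat.dvd_antisymm hdvd hpn
  · exact Or.inl hpn
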